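/- For all n ≥ r ≥ 3, for every (r+1)-coloring of the edges of the complete r-uniform hypergraph K_n^r, there exists a monochromatic component of order at least rn/(r+1). -/

import Mathlib

open Finset

/-- Two vertices are connected by the edge set `E` (of a hypergraph)
if they are joined by a walk of edges from `E`. -/
def connBy {V : Type*} (E : Set (Finset V)) : V → V → Prop :=
  Relation.ReflTransGen (fun u w => ∃ e ∈ E, u ∈ e ∧ w ∈ e)

/-- The connected component of `v` in the hypergraph with edge set `E`. -/
def compOf {V : Type*} (E : Set (Finset V)) (v : V) : Set V :=
  {u | connBy E u v}

namespace Stmt2Aux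

attribute [local instance] Classical.propDecidable

private lemma connBy_symm {V : Type*} {E : Set (Finset V)} {u v : V}
    (h : connBy E u v) : connBy E v u := by
  have hs : Symmetric (fun u w : V => ∃ e ∈ E, u ∈ e ∧ w ∈ e) := by
    rintro a b ⟨e, he, ha, hb⟩; exact ⟨e, he, hb, ha⟩
  exact (@Relation.ReflTransGen.symmetric _ _ ⟨fun a b h => hs h⟩).symm _ _ h

private lemma mem_compOf_self {V : Type*} (E : Set (Finset V)) (v : V) : v ∈ compOf E v :=
  Relation.ReflTransGen.refl

private lemma compOf_eq_of_mem {V : Type*} {E : Set (Finset V)} {u v : V}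
    (h : u ∈ compOf E v) : compOf E u = compOf E v := by
  ext w
  constructor
  · intro hw; exact Relation.ReflTransGen.trans hw h
  · intro hw; exact Relation.ReflTransGen.trans hw (connBy_symm h)

/-- If `u` is in the component of `x` but `z` is not, then `u` is not in the
component of `z`. -/
private lemma not_mem_compOf {V : Type*} {E : Set (Finset V)} {u x z : V}
    (hu : u ∈ compOf E x) (hz : z ∉ compOf E x) : u ∉ compOf E z := by
  intro hm
  -- compOf u = compOf x, compOf u = compOf z
  have h1 := compOf_eq_of_mem hu
  have h2 := compOf_eq_of_mem hm
  exact hz (by rw [← h1, h2]; exact mem_compOf_self E z)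

private lemma edge_subset_compOf {V : Type*} {E : Set (Finset V)} {e : Finset V} {x u : V}
    (he : e ∈ E) (hx : x ∈ e) (hu : u ∈ e) : u ∈ compOf E x :=
  Relation.ReflTransGen.single ⟨e, he, hu, hx⟩

variable {n r : ℕ}

/-- edges of color `c` -/
private def EC (χ : Finset (Fin n) → Fin (r+1)) (c : Fin (r+1)) : Set (Finset (Fin n)) :=
  {e | e.card = r ∧ χ e = c}

/-- the component of color `c` containing `x` -/
private def cp (χ : Finset (Fin n) → Fin (r+1)) (c : Fin (r+1)) (x : Fin n) : Set (Fin n) :=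
  compOf (EC χ c) x

/-- complement of the component of color `c` at `x`, as a finset -/
private noncomputable def Xf (χ : Finset (Fin n) → Fin (r+1)) (c : Fin (r+1)) (x : Fin n) :
    Finset (Fin n) :=
  univ.filter (fun y => y ∉ cp χ c x)

/-- the set of colors at which `x` and `y` disagree (lie in different components) -/
private noncomputable def Df (χ : Finset (Fin n) → Fin (r+1)) (x y : Fin n) :
    Finset (Fin (r+1)) :=
  univ.filter (fun c => y ∉ cp χ c x)

variable {χ : Finset (Fin n) → Fin (r+1)}

private lemma mem_cp_self (χ : Finset (Fin n) → Fin (r+1)) (c : Fin (r+1)) (x : Fin n) :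
    x ∈ cp χ c x :=
  Relation.ReflTransGen.refl

private lemma hit (hn : r ≤ n) (x : Fin n) (S : Finset (Fin n)) (hxS : x ∉ S)
    (hcard : S.card + 1 ≤ r)
    (hhit : ∀ c : Fin (r+1), ∃ z ∈ S, z ∉ cp χ c x) : False := by
  have h1 : (insert x S).card ≤ r := by
    rw [Finset.card_insert_of_notMem hxS]; omega
  obtain ⟨e, hsub, hcarde⟩ := Finset.exists_superset_card_eq h1 (by simp [hn])
  obtain ⟨z, hzS, hz⟩ := hhit (χ e)
  exact hz (edge_subset_compOf ⟨hcarde, rfl⟩ (hsub (Finset.mem_insert_self x S))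
    (hsub (Finset.mem_insert_of_mem hzS)))

/-- a point outside every component (under the size hypothesis) -/
private lemma pick_exists (hr : 3 ≤ r)
    (hH : ∀ c x, n < (r+1) * (Xf χ c x).card) (c : Fin (r+1)) (v : Fin n) :
    ∃ z, z ∉ cp χ c v := by
  have h := hH c v
  have hpos : 0 < (Xf χ c v).card := by
    rcases Nat.eq_zero_or_pos (Xf χ c v).card with h0 | h0
    · rw [h0] at h; omega
    · exact h0
  obtain ⟨z, hz⟩ := Finset.card_pos.mp hpos
  exact ⟨z, (Finset.mem_filter.mp hz).2⟩

private lemma claim1 (hr : 3 ≤ r) (hn : r ≤ n)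
    (hH : ∀ c x, n < (r+1) * (Xf χ c x).card) (x y : Fin n) :
    (Df χ x y).card ≤ 2 := by
  by_contra hcon
  push_neg at hcon
  choose pk hpk using pick_exists hr hH
  have hADcard : (univ.filter (fun c => y ∈ cp χ c x)).card + (Df χ x y).card = r + 1 := by
    have := Finset.card_filter_add_card_filter_not (s := (univ : Finset (Fin (r+1))))
      (p := fun c => y ∈ cp χ c x)
    simpa [Df, Finset.card_univ] using this
  set A : Finset (Fin (r+1)) := univ.filter (fun c => y ∈ cp χ c x) with hA
  have hxy : x ≠ y := by
    rintro rfl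
    have : (Df χ x x) = ∅ := by
      ext c; simp only [Df, Finset.mem_filter, Finset.mem_univ, true_and,
        Finset.notMem_empty, iff_false, not_not]
      exact mem_cp_self χ c x
    rw [this] at hcon; simp at hcon
  set S : Finset (Fin n) := insert y (A.image (fun c => pk c x)) with hS
  have hxS : x ∉ S := by
    intro hxmem
    rw [hS, Finset.mem_insert] at hxmem
    rcases hxmem with h | h
    · exact hxy h
    · rw [Finset.mem_image] at h
      obtain ⟨c, _, hc⟩ := h
      exact hpk c x (by rw [hc]; exact mem_cp_self χ c x)
  have hScard : S.card + 1 ≤ r := by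
    have h1 : S.card ≤ 1 + A.card := by
      calc S.card ≤ (A.image (fun c => pk c x)).card + 1 := Finset.card_insert_le _ _
        _ ≤ A.card + 1 := by
            exact Nat.add_le_add_right (Finset.card_image_le) 1
        _ = 1 + A.card := by omega
    omega
  refine hit (χ := χ) hn x S hxS hScard ?_
  intro c
  by_cases hc : y ∈ cp χ c x
  · refine ⟨pk c x, ?_, hpk c x⟩
    rw [hS]
    exact Finset.mem_insert_of_mem (Finset.mem_image_of_mem _ (by simp [hA, hc]))
  · exact ⟨y, by simp [hS], hc⟩

/-- no vertex has three colors on which some other vertex disagrees with it -/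
private lemma three (hr : 3 ≤ r) (hn : r ≤ n)
    (hH : ∀ c x, n < (r+1) * (Xf χ c x).card) (x z : Fin n) (c1 c2 c3 : Fin (r+1))
    (h12 : c1 ≠ c2) (h13 : c1 ≠ c3) (h23 : c2 ≠ c3)
    (hz1 : z ∉ cp χ c1 x) (hz2 : z ∉ cp χ c2 x) (hz3 : z ∉ cp χ c3 x) : False := by
  have hsub : ({c1, c2, c3} : Finset (Fin (r+1))) ⊆ Df χ x z := by
    intro c hc
    simp only [Finset.mem_insert, Finset.mem_singleton] at hc
    rcases hc with rfl | rfl | rfl <;> simp [Df, hz1, hz2, hz3]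
  have h3 : ({c1, c2, c3} : Finset (Fin (r+1))).card = 3 := by
    rw [Finset.card_insert_of_notMem (by simp [h12, h13]),
      Finset.card_insert_of_notMem (by simp [h23]), Finset.card_singleton]
  have := Finset.card_le_card hsub
  have := claim1 hr hn hH x z
  omega

private lemma l3 (hr : 3 ≤ r) (hn : r ≤ n)
    (hH : ∀ c x, n < (r+1) * (Xf χ c x).card) (x z w : Fin n) (a b c d : Fin (r+1))
    (hab : a ≠ b) (hcd : c ≠ d) (hac : a ≠ c) (had : a ≠ d) (hbc : b ≠ c) (hbd : b ≠ d)
    (hza : z ∉ cp χ a x) (hzb : z ∉ cp χ b x)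
    (hwc : w ∉ cp χ c x) (hwd : w ∉ cp χ d x) : False := by
  choose pk hpk using pick_exists hr hH
  set R : Finset (Fin (r+1)) := univ \ {a, b, c, d} with hR
  have habcd : ({a, b, c, d} : Finset (Fin (r+1))).card = 4 := by
    rw [Finset.card_insert_of_notMem (by simp [hab, hac, had]),
      Finset.card_insert_of_notMem (by simp [hbc, hbd]),
      Finset.card_insert_of_notMem (by simp [hcd]), Finset.card_singleton]
  have hRcard : R.card = r + 1 - 4 := by
    rw [hR, Finset.card_sdiff_of_subset (Finset.subset_univ _), habcd, Finset.card_univ,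
      Fintype.card_fin]
  set S : Finset (Fin n) := insert z (insert w (R.image (fun c' => pk c' x))) with hS
  have hxS : x ∉ S := by
    intro hxmem
    rw [hS, Finset.mem_insert, Finset.mem_insert] at hxmem
    rcases hxmem with h | h | h
    · exact hza (by rw [← h]; exact mem_cp_self χ a x)
    · exact hwc (by rw [← h]; exact mem_cp_self χ c x)
    · rw [Finset.mem_image] at h
      obtain ⟨c', _, hc'⟩ := h
      exact hpk c' x (by rw [hc']; exact mem_cp_self χ c' x)
  have hScard : S.card + 1 ≤ r := by
    have h1 : S.card ≤ 1 + (1 + R.card) := by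
      calc S.card ≤ (insert w (R.image (fun c' => pk c' x))).card + 1 :=
            Finset.card_insert_le _ _
        _ ≤ ((R.image (fun c' => pk c' x)).card + 1) + 1 := by
            exact Nat.add_le_add_right (Finset.card_insert_le _ _) 1
        _ ≤ (R.card + 1) + 1 := by
            exact Nat.add_le_add_right (Nat.add_le_add_right Finset.card_image_le 1) 1
        _ = 1 + (1 + R.card) := by omega
    omega
  refine hit (χ := χ) hn x S hxS hScard ?_
  intro c'
  by_cases h : c' ∈ ({a, b, c, d} : Finset (Fin (r+1)))
  · simp only [Finset.mem_insert, Finset.mem_singleton] at h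
    rcases h with rfl | rfl | rfl | rfl
    · exact ⟨z, by simp [hS], hza⟩
    · exact ⟨z, by simp [hS], hzb⟩
    · exact ⟨w, by simp [hS], hwc⟩
    · exact ⟨w, by simp [hS], hwd⟩
  · refine ⟨pk c' x, ?_, hpk c' x⟩
    rw [hS]
    exact Finset.mem_insert_of_mem (Finset.mem_insert_of_mem
      (Finset.mem_image_of_mem _ (by
        rw [hR, Finset.mem_sdiff]
        exact ⟨Finset.mem_univ _, h⟩)))

/-- every vertex has a star center -/
private lemma center (hr : 3 ≤ r) (hn : r ≤ n)
    (hH : ∀ c x, n < (r+1) * (Xf χ c x).card) (x : Fin n) :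
    ∃ g : Fin (r+1), ∀ c c' : Fin (r+1), c ≠ c' → c ≠ g → c' ≠ g →
      ∀ z, z ∉ cp χ c x → z ∉ cp χ c' x → False := by
  by_cases h0 : ∀ (c c' : Fin (r+1)) (z : Fin n), c ≠ c' →
      z ∉ cp χ c x → z ∉ cp χ c' x → False
  · exact ⟨0, fun c c' hcc' _ _ z hz hz' => h0 c c' z hcc' hz hz'⟩
  push_neg at h0
  obtain ⟨c1, c2, y, hc12, hy1, hy2, -⟩ := h0
  -- y agrees with x everywhere else
  have hyD : ∀ d, d ≠ c1 → d ≠ c2 → y ∈ cp χ d x := by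
    intro d h1 h2
    by_contra hd
    exact three hr hn hH x y c1 c2 d hc12 (Ne.symm h1) (Ne.symm h2) hy1 hy2 hd
  have wings : ∀ d z, d ≠ c1 → d ≠ c2 → z ∉ cp χ d x →
      (z ∉ cp χ c1 x ∨ z ∉ cp χ c2 x) := by
    intro d z hd1 hd2 hzd
    by_contra hcontra
    push_neg at hcontra
    obtain ⟨hz1, hz2⟩ := hcontra
    refine three hr hn hH z y c1 c2 d hc12 (Ne.symm hd1) (Ne.symm hd2) ?_ ?_ ?_
    · intro hm
      exact hy1 (by rwa [show cp χ c1 z = cp χ c1 x from compOf_eq_of_mem hz1] at hm)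
    · intro hm
      exact hy2 (by rwa [show cp χ c2 z = cp χ c2 x from compOf_eq_of_mem hz2] at hm)
    · exact not_mem_compOf (hyD d hd1 hd2) hzd
  by_cases hii : ∀ d z, d ≠ c1 → d ≠ c2 → z ∉ cp χ d x → z ∉ cp χ c1 x
  · -- center c1
    refine ⟨c1, fun c c' hcc' hc hc' z hz hz' => ?_⟩
    by_cases hcB : c = c2
    · subst hcB
      have hc'2 : c' ≠ c := fun h => hcc' h.symm
      have h3 := hii c' z hc' hc'2 hz'
      exact three hr hn hH x z c c' c1 hcc' hc hc' hz hz' h3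
    · have h3 := hii c z hc hcB hz
      exact three hr hn hH x z c c' c1 hcc' hc hc' hz hz' h3
  · -- center c2
    push_neg at hii
    obtain ⟨d0, z0, hd01, hd02, hz0d, hz0c1⟩ := hii
    have hz0c2 : z0 ∉ cp χ c2 x := by
      rcases wings d0 z0 hd01 hd02 hz0d with h | h
      · exact absurd hz0c1 h
      · exact h
    -- helper: no z disagrees with x at both c1 and some e ∉ {c1, c2}
    have helper : ∀ (e : Fin (r+1)) (z : Fin n), e ≠ c1 → e ≠ c2 →
        z ∉ cp χ c1 x → z ∉ cp χ e x → False := by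
      intro e z he1 he2 hzc1 hze
      by_cases hed0 : e = d0
      · have hz0e : z0 ∉ cp χ e x := by rw [hed0]; exact hz0d
        -- need a fourth color d1 ∉ {c1, c2, e}
        have hcard3 : ({c1, c2, e} : Finset (Fin (r+1))).card ≤ 3 := by
          apply le_trans (Finset.card_insert_le _ _)
          exact Nat.add_le_add_right (le_trans (Finset.card_insert_le _ _)
            (by simp)) 1
        have hne : (univ \ ({c1, c2, e} : Finset (Fin (r+1)))).Nonempty := by
          rw [← Finset.card_pos, Finset.card_sdiff_of_subset (Finset.subset_univ _), Finset.card_univ,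
            Fintype.card_fin]
          omega
        obtain ⟨d1, hd1⟩ := hne
        simp only [Finset.mem_sdiff, Finset.mem_univ, true_and, Finset.mem_insert,
          Finset.mem_singleton, not_or] at hd1
        obtain ⟨hd1c1, hd1c2, hd1e⟩ := hd1
        obtain ⟨w, hw⟩ := pick_exists hr hH d1 x
        rcases wings d1 w hd1c1 hd1c2 hw with hwc1 | hwc2
        · -- pairs (d1, c1) for w and (e = d0, c2) for z0
          exact l3 hr hn hH x w z0 d1 c1 e c2 hd1c1 he2 hd1e hd1c2
            (Ne.symm he1) hc12 hw hwc1 hz0e hz0c2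
        · -- pairs (d1, c2) for w and (e, c1) for z
          exact l3 hr hn hH x w z d1 c2 e c1 hd1c2 he1 hd1e hd1c1
            (Ne.symm he2) (Ne.symm hc12) hw hwc2 hze hzc1
      · -- e ≠ d0 : pairs (c1, e) for z and (d0, c2) for z0
        exact l3 hr hn hH x z z0 c1 e d0 c2 (Ne.symm he1) hd02 (Ne.symm hd01) hc12
          hed0 he2 hzc1 hze hz0d hz0c2
    refine ⟨c2, fun c c' hcc' hc hc' z hz hz' => ?_⟩
    by_cases hcB : c = c1
    · subst hcB
      exact helper c' z (fun h => hcc' h.symm) hc' hz hz'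
    · by_cases hc'B : c' = c1
      · subst hc'B
        exact helper c z hcB hc hz' hz
      · rcases wings c z hcB hc hz with h | h
        · exact helper c z hcB hc h hz
        · exact three hr hn hH x z c c' c2 hcc' hc hc' hz hz' h


/-- group of x with respect to center g -/
private noncomputable def GF (χ : Finset (Fin n) → Fin (r+1)) (g : Fin (r+1)) (x : Fin n) :
    Finset (Fin n) :=
  univ.filter (fun y => ∀ c, c ≠ g → y ∈ cp χ c x)

private lemma gcount (hr : 3 ≤ r) (hn : r ≤ n)
    (hH : ∀ c x, n < (r+1) * (Xf χ c x).card) (x : Fin n) (g : Fin (r+1))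
    (hstar : ∀ c c' : Fin (r+1), c ≠ c' → c ≠ g → c' ≠ g →
      ∀ z, z ∉ cp χ c x → z ∉ cp χ c' x → False) :
    (r+1) * (GF χ g x).card + r * n < (r+1) * n := by
  set U : Finset (Fin n) := (univ.erase g).biUnion (fun c => Xf χ c x) with hU
  have hUcard : U.card = ∑ c ∈ univ.erase g, (Xf χ c x).card := by
    rw [hU]
    apply Finset.card_biUnion
    intro c hc c' hc' hne
    rw [Function.onFun, Finset.disjoint_left]
    intro z hz hz'
    exact hstar c c' hne (Finset.ne_of_mem_erase hc) (Finset.ne_of_mem_erase hc') z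
      ((Finset.mem_filter.mp hz).2) ((Finset.mem_filter.mp hz').2)
  have hdisjG : Disjoint U (GF χ g x) := by
    rw [Finset.disjoint_left]
    intro z hz hzG
    rw [hU, Finset.mem_biUnion] at hz
    obtain ⟨c, hc, hzc⟩ := hz
    exact (Finset.mem_filter.mp hzc).2
      ((Finset.mem_filter.mp hzG).2 c (Finset.ne_of_mem_erase hc))
  have hle : U.card + (GF χ g x).card ≤ n := by
    rw [← Finset.card_union_of_disjoint hdisjG]
    calc (U ∪ GF χ g x).card ≤ (univ : Finset (Fin n)).card :=
          Finset.card_le_card (Finset.subset_univ _)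
      _ = n := by rw [Finset.card_univ, Fintype.card_fin]
  have herase : (univ.erase g).card = r := by
    rw [Finset.card_erase_of_mem (Finset.mem_univ g), Finset.card_univ, Fintype.card_fin]
    omega
  have hsum : r * n < (r+1) * U.card := by
    have h1 : ∑ _c ∈ univ.erase g, n < ∑ c ∈ univ.erase g, (r+1) * (Xf χ c x).card := by
      apply Finset.sum_lt_sum_of_nonempty
      · rw [← Finset.card_pos, herase]; omega
      · intro c _; exact hH c x
    rw [Finset.sum_const, herase, smul_eq_mul, ← Finset.mul_sum] at h1
    rw [hUcard]
    exact h1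
  have hmul := Nat.mul_le_mul_left (r+1) hle
  rw [Nat.mul_add] at hmul
  linarith

private lemma label (hr : 3 ≤ r) (hn : r ≤ n)
    (hH : ∀ c x, n < (r+1) * (Xf χ c x).card) (x x' : Fin n) (g : Fin (r+1))
    (hsx : ∀ c c' : Fin (r+1), c ≠ c' → c ≠ g → c' ≠ g →
      ∀ z, z ∉ cp χ c x → z ∉ cp χ c' x → False)
    (hsx' : ∀ c c' : Fin (r+1), c ≠ c' → c ≠ g → c' ≠ g →
      ∀ z, z ∉ cp χ c x' → z ∉ cp χ c' x' → False)
    (cstar : Fin (r+1)) (hcg : cstar ≠ g) (hmem : x' ∉ cp χ cstar x) : False := by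
  have hD := claim1 hr hn hH x x'
  have hcD : cstar ∈ Df χ x x' := by simp [Df, hmem]
  have hcard : (insert g (Df χ x x')).card ≤ 3 := by
    calc (insert g (Df χ x x')).card ≤ (Df χ x x').card + 1 := Finset.card_insert_le _ _
      _ ≤ 3 := by omega
  have hne : (univ \ insert g (Df χ x x')).Nonempty := by
    rw [← Finset.card_pos, Finset.card_sdiff_of_subset (Finset.subset_univ _), Finset.card_univ,
      Fintype.card_fin]
    omega
  obtain ⟨d, hd⟩ := hne
  rw [Finset.mem_sdiff, Finset.mem_insert] at hd
  push_neg at hd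
  have hdg : d ≠ g := hd.2.1
  have hdD : d ∉ Df χ x x' := hd.2.2
  have hdc : d ≠ cstar := fun h => hdD (h ▸ hcD)
  have hx'd : x' ∈ cp χ d x := by
    by_contra h
    exact hdD (by simp [Df, h])
  obtain ⟨z, hz⟩ := pick_exists hr hH d x
  have hzx' : z ∉ cp χ d x' := by
    rw [show cp χ d x' = cp χ d x from compOf_eq_of_mem hx'd]
    exact hz
  have hz1 : z ∈ cp χ cstar x := by
    by_contra h
    exact hsx d cstar hdc hdg hcg z hz h
  have hz2 : z ∈ cp χ cstar x' := by
    by_contra h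
    exact hsx' d cstar hdc hdg hcg z hzx' h
  apply hmem
  have hx'self : x' ∈ cp χ cstar x' := mem_compOf_self _ x'
  rw [show cp χ cstar x' = cp χ cstar x from
    (compOf_eq_of_mem hz2).symm.trans (compOf_eq_of_mem hz1)] at hx'self
  exact hx'self

private lemma key (hr : 3 ≤ r) (hn : r ≤ n) (χ : Finset (Fin n) → Fin (r+1))
    (hH : ∀ c x, n < (r+1) * (Xf χ c x).card) : False := by
  choose gx hgx using center (χ := χ) hr hn hH
  have hfib : ∀ γ : Fin (r+1), (r+1) * (univ.filter (fun x => gx x = γ)).card + 1 ≤ n := by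
    intro γ
    rcases Finset.eq_empty_or_nonempty (univ.filter (fun x => gx x = γ)) with he | hne
    · rw [he]; simp; omega
    · obtain ⟨x, hx⟩ := hne
      have hgxx : gx x = γ := (Finset.mem_filter.mp hx).2
      have hsub : (univ.filter (fun x' => gx x' = γ)) ⊆ GF χ γ x := by
        intro x' hx'
        have hgx' : gx x' = γ := (Finset.mem_filter.mp hx').2
        rw [GF, Finset.mem_filter]
        refine ⟨Finset.mem_univ _, fun c hc => ?_⟩
        by_contra hcmem
        exact label hr hn hH x x' γ (hgxx ▸ hgx x) (hgx' ▸ hgx x') c hc hcmem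
      have hcard := Finset.card_le_card hsub
      have hg := gcount hr hn hH x γ (hgxx ▸ hgx x)
      have hmul : (r+1) * (univ.filter (fun x' => gx x' = γ)).card ≤
          (r+1) * (GF χ γ x).card := Nat.mul_le_mul_left _ hcard
      have hid : (r+1) * n = r * n + n := by ring
      linarith
  have htotal : n = ∑ γ : Fin (r+1), (univ.filter (fun x => gx x = γ)).card := by
    have h := Finset.card_eq_sum_card_fiberwise
      (f := gx) (s := (univ : Finset (Fin n))) (t := (univ : Finset (Fin (r+1))))
      (fun x _ => Finset.mem_univ _)
    rw [Finset.card_univ, Fintype.card_fin] at h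
    exact h
  have hsum : (r+1) * n + (r+1) ≤ (r+1) * n := by
    calc (r+1) * n + (r+1)
        = ∑ γ : Fin (r+1), ((r+1) * (univ.filter (fun x => gx x = γ)).card + 1) := by
          rw [Finset.sum_add_distrib, ← Finset.mul_sum, ← htotal, Finset.sum_const,
            Finset.card_univ, Fintype.card_fin, smul_eq_mul, mul_one]
      _ ≤ ∑ _γ : Fin (r+1), n := Finset.sum_le_sum (fun γ _ => hfib γ)
      _ = (r+1) * n := by
          rw [Finset.sum_const, Finset.card_univ, Fintype.card_fin, smul_eq_mul]
  omega

private lemma cls_card (χ : Finset (Fin n) → Fin (r+1)) (c : Fin (r+1)) (x : Fin n) :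
    (univ.filter (fun y => y ∈ cp χ c x)).card + (Xf χ c x).card = n := by
  have h := Finset.card_filter_add_card_filter_not
    (s := (univ : Finset (Fin n))) (p := fun y => y ∈ cp χ c x)
  rw [Finset.card_univ, Fintype.card_fin] at h
  simpa [Xf] using h

private lemma ncard_cp (χ : Finset (Fin n) → Fin (r+1)) (c : Fin (r+1)) (x : Fin n) :
    (cp χ c x).ncard = (univ.filter (fun y => y ∈ cp χ c x)).card := by
  rw [← Set.ncard_coe_finset]
  congr 1
  ext y
  simp

end Stmt2Aux

theorem stmt2 (n r : ℕ) (hr : 3 ≤ r) (hn : r ≤ n) (χ : Finset (Fin n) → Fin (r + 1)) :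
    ∃ (c : Fin (r + 1)) (v : Fin n),
      (r : ℚ) * n / (r + 1) ≤ (compOf {e | e.card = r ∧ χ e = c} v).ncard := by
  classical
  by_contra hcon
  push_neg at hcon
  apply Stmt2Aux.key hr hn χ
  intro c x
  have h := hcon c x
  have hpos : (0 : ℚ) < (r : ℚ) + 1 := by positivity
  have hq : ((compOf {e | e.card = r ∧ χ e = c} x).ncard : ℚ) * ((r : ℚ) + 1)
      < (r : ℚ) * n := (lt_div_iff₀ hpos).mp h
  have hnat : (compOf {e | e.card = r ∧ χ e = c} x).ncard * (r + 1) < r * n := by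
    exact_mod_cast hq
  have hnat2 : (Stmt2Aux.cp χ c x).ncard * (r + 1) < r * n := hnat
  rw [Stmt2Aux.ncard_cp] at hnat2
  have hcls := Stmt2Aux.cls_card χ c x
  set a := (univ.filter (fun y => y ∈ Stmt2Aux.cp χ c x)).card with ha
  set b := (Stmt2Aux.Xf χ c x).card with hb
  -- a + b = n, a * (r+1) < r * n  ⟹  n < (r+1) * b
  have hid1 : (a + b) * (r + 1) = a * (r+1) + b * (r+1) := by ring
  have hid2 : n * (r + 1) = r * n + n := by ring
  have hid3 : (r + 1) * b = b * (r + 1) := by ring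
  have : (a + b) * (r+1) = n * (r+1) := by rw [hcls]
  linarith
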